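/- arXiv:1604.04413 — 2 statements merged into one kernel-verified Lean document; each statement's English description precedes it below -/
import Mathlib

section
/- Let q ≥ 2 be an integer, (ε_d : d ∈ D_q) a probability vector on D_q, and V the associated channel. Then for every real α > 0, Σ_{y ∈ Y} ( Σ_{x ∈ Z_q} (1/q) · V(y ∣ x)^α )^{1/α} = Σ_{d ∈ D_q} ε_d · d^{(α−1)/α}, where the sum over y ranges over all residue classes [r]_d with d ∈ D_q and r ∈ Z_d, and powers of 0 are interpreted as 0. -/
open Finset

noncomputable def Vch (ε : ℕ → ℝ) (d r x : ℕ) : ℝ :=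
  if x % d = r % d then ε d else 0

lemma card_mod_filter (d m r : ℕ) (hd : 0 < d) (hr : r < d) :
    ((range (d * m)).filter (fun x => x % d = r)).card = m := by
  have himg : (range (d * m)).filter (fun x => x % d = r)
      = (range m).image (fun k => d * k + r) := by
    ext x
    simp only [mem_filter, mem_range, mem_image]
    constructor
    · rintro ⟨hx, hm⟩
      refine ⟨x / d, ?_, ?_⟩
      · have hx' : x / d * d < d * m := lt_of_le_of_lt (Nat.div_mul_le_self x d) hx
        rw [mul_comm] at hx'
        exact lt_of_mul_lt_mul_left hx' (Nat.zero_le d)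
      · rw [← hm]
        exact Nat.div_add_mod x d
    · rintro ⟨k, hk, rfl⟩
      refine ⟨?_, ?_⟩
      · calc d * k + r < d * k + d := by omega
          _ = d * (k + 1) := by ring
          _ ≤ d * m := Nat.mul_le_mul_left d hk
      · rw [Nat.mul_add_mod, Nat.mod_eq_of_lt hr]
  rw [himg, card_image_of_injective _ (fun a b hab => Nat.eq_of_mul_eq_mul_left hd (Nat.add_right_cancel hab)), card_range]

/-- For every real `α > 0`,
`Σ_{y ∈ Y} (Σ_{x ∈ Z_q} (1/q)·V(y ∣ x)^α)^{1/α} = Σ_{d ∈ D_q} ε_d · d^{(α−1)/α}`,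
where `y` ranges over all residue classes `[r]_d` with `d ∈ D_q`, `r ∈ Z_d`,
and real powers are `Real.rpow` (so powers of `0` with positive exponent are `0`). -/
theorem stmt_6 (q : ℕ) (hq : 2 ≤ q)
    (ε : ℕ → ℝ) (hε : ∀ d ∈ q.divisors, 0 ≤ ε d) (hsum : ∑ d ∈ q.divisors, ε d = 1)
    (α : ℝ) (hα : 0 < α) :
    (∑ d ∈ q.divisors, ∑ r ∈ range d,
        (∑ x ∈ range q, (1 / (q : ℝ)) * (Vch ε d r x) ^ α) ^ (1 / α))
      = ∑ d ∈ q.divisors, ε d * (d : ℝ) ^ ((α - 1) / α) := by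
  have hq0 : 0 < q := by omega
  refine Finset.sum_congr rfl fun d hd => ?_
  obtain ⟨hdvd, -⟩ := Nat.mem_divisors.mp hd
  have hd0 : 0 < d := Nat.pos_of_dvd_of_pos hdvd hq0
  have hεd : 0 ≤ ε d := hε d hd
  have hdR : (0:ℝ) < d := by exact_mod_cast hd0
  have hqR : (0:ℝ) < q := by exact_mod_cast hq0
  have key : ∀ r ∈ range d,
      (∑ x ∈ range q, (1 / (q : ℝ)) * (Vch ε d r x) ^ α) ^ (1 / α)
        = ε d * (d : ℝ) ^ (-(1 / α)) := by
    intro r hr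
    have hrd : r < d := mem_range.mp hr
    have hinner : ∑ x ∈ range q, (1 / (q : ℝ)) * (Vch ε d r x) ^ α
        = (ε d) ^ α / d := by
      have hite : ∀ x, (1 / (q : ℝ)) * (Vch ε d r x) ^ α
          = if x % d = r then (1 / (q : ℝ)) * (ε d) ^ α else 0 := by
        intro x
        simp only [Vch, Nat.mod_eq_of_lt hrd]
        split <;> simp [Real.zero_rpow hα.ne']
      simp_rw [hite]
      rw [← Finset.sum_filter, Finset.sum_const]
      have hcard : ((range q).filter (fun x => x % d = r)).card = q / d := by
        have hq' : q = d * (q / d) := (Nat.mul_div_cancel' hdvd).symm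
        rw [hq', Nat.mul_div_cancel_left _ hd0]
        exact card_mod_filter d (q / d) r hd0 hrd
      rw [hcard, nsmul_eq_mul]
      have hq_eq : (q : ℝ) = d * (q / d : ℕ) := by
        exact_mod_cast (Nat.mul_div_cancel' hdvd).symm
      have h1 : ((q / d : ℕ) : ℝ) ≠ 0 := by
        have : 0 < q / d := Nat.div_pos (Nat.le_of_dvd hq0 hdvd) hd0
        exact_mod_cast this.ne'
      rw [hq_eq]
      field_simp
    rw [hinner, Real.div_rpow (Real.rpow_nonneg hεd α) hdR.le,
      ← Real.rpow_mul hεd, mul_one_div_cancel hα.ne', Real.rpow_one,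
      div_eq_mul_inv, ← Real.rpow_neg hdR.le]
  rw [Finset.sum_congr rfl key, Finset.sum_const, card_range, nsmul_eq_mul]
  have hpow : (d : ℝ) ^ ((α - 1) / α) = d * (d : ℝ) ^ (-(1 / α)) := by
    rw [show (α - 1) / α = 1 + -(1 / α) by field_simp; ring,
      Real.rpow_add hdR, Real.rpow_one]
  rw [hpow]; ring
end

section
/- Let q ≥ 2 be an integer, (ε_d : d ∈ D_q) a probability vector on D_q, and V the associated channel. Then the symmetric capacity I(V) := Σ_{y ∈ Y} Σ_{x ∈ Z_q} (1/q) · V(y ∣ x) · ln( V(y ∣ x) / ( Σ_{x' ∈ Z_q} (1/q) · V(y ∣ x') ) ), with the convention that summands with V(y ∣ x) = 0 equal 0, satisfies I(V) = Σ_{d ∈ D_q} ε_d · ln d. -/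
open Finset

lemma card_filter_mod (q d r : ℕ) (hd : d ∣ q) (hd0 : 0 < d) (hr : r < d) :
    ((range q).filter (fun x => x % d = r)).card = q / d := by
  obtain ⟨m, rfl⟩ := hd
  rw [Nat.mul_div_cancel_left _ hd0]
  have himg : ((range (d*m)).filter (fun x => x % d = r))
      = (range m).image (fun i => i * d + r) := by
    ext x
    simp only [mem_filter, mem_range, mem_image]
    constructor
    · rintro ⟨h1, h2⟩
      refine ⟨x / d, ?_, ?_⟩
      · exact (Nat.div_lt_iff_lt_mul hd0).2 (by rw [mul_comm]; exact h1)
      · conv_rhs => rw [← Nat.div_add_mod x d, h2, mul_comm]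
    · rintro ⟨i, hi, rfl⟩
      refine ⟨?_, ?_⟩
      · calc i * d + r < (i+1) * d := by ring_nf; omega
          _ ≤ m * d := Nat.mul_le_mul_right d hi
          _ = d * m := mul_comm _ _
      · rw [add_comm, Nat.add_mul_mod_self_right, Nat.mod_eq_of_lt hr]
  rw [himg, Finset.card_image_of_injective _ (fun a b hab => by
    have : a * d = b * d := by omega
    exact Nat.eq_of_mul_eq_mul_right hd0 this), card_range]

lemma sum_ind (q d r : ℕ) (hd : d ∣ q) (hd0 : 0 < d) (hr : r < d) (c : ℝ) :
    ∑ x ∈ range q, (if x % d = r then c else 0) = ((q / d : ℕ) : ℝ) * c := by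
  rw [← Finset.sum_filter, Finset.sum_const, card_filter_mod q d r hd hd0 hr, nsmul_eq_mul]


/-- The symmetric capacity
`I(V) = Σ_{y ∈ Y} Σ_{x ∈ Z_q} (1/q)·V(y∣x)·ln(V(y∣x) / (Σ_{x' ∈ Z_q} (1/q)·V(y∣x')))`
of the channel `V` equals `Σ_{d ∈ D_q} ε_d · ln d`.
(In Lean, summands with `V(y∣x) = 0` vanish automatically since they carry the factor
`V(y∣x) = 0`, matching the stated convention.) -/
theorem stmt_7 (q : ℕ) (hq : 2 ≤ q)
    (ε : ℕ → ℝ) (hε : ∀ d ∈ q.divisors, 0 ≤ ε d) (hsum : ∑ d ∈ q.divisors, ε d = 1) :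
    (∑ d ∈ q.divisors, ∑ r ∈ range d, ∑ x ∈ range q,
        (1 / (q : ℝ)) * Vch ε d r x *
          Real.log (Vch ε d r x / ∑ x' ∈ range q, (1 / (q : ℝ)) * Vch ε d r x'))
      = ∑ d ∈ q.divisors, ε d * Real.log d := by
  have hq0 : (0:ℝ) < q := by positivity
  apply Finset.sum_congr rfl
  intro d hd
  obtain ⟨hdvd, hqne⟩ := Nat.mem_divisors.1 hd
  have hd0 : 0 < d := Nat.pos_of_dvd_of_pos hdvd (by omega)
  have hqd : ((q / d : ℕ) : ℝ) = (q : ℝ) / d := by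
    rw [Nat.cast_div hdvd (by exact_mod_cast hd0.ne')]
  by_cases hε0 : ε d = 0
  · rw [hε0]
    simp only [zero_mul]
    apply Finset.sum_eq_zero
    intro r hr
    apply Finset.sum_eq_zero
    intro x hx
    simp [Vch, hε0]
  · have hεpos : 0 < ε d := lt_of_le_of_ne (hε d hd) (Ne.symm hε0)
    have key : ∀ r ∈ range d,
        (∑ x ∈ range q, (1 / (q : ℝ)) * Vch ε d r x *
          Real.log (Vch ε d r x / ∑ x' ∈ range q, (1 / (q : ℝ)) * Vch ε d r x'))
        = ε d / d * Real.log d := by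
      intro r hr
      have hrd : r % d = r := Nat.mod_eq_of_lt (mem_range.1 hr)
      have hden : (∑ x' ∈ range q, (1 / (q : ℝ)) * Vch ε d r x') = ε d / d := by
        simp only [Vch, hrd, mul_ite, mul_zero]
        rw [sum_ind q d r hdvd hd0 (mem_range.1 hr), hqd]
        field_simp
      rw [hden]
      have : ∀ x, (1 / (q : ℝ)) * Vch ε d r x * Real.log (Vch ε d r x / (ε d / d))
          = if x % d = r then (1 / (q:ℝ)) * ε d * Real.log d else 0 := by
        intro x
        simp only [Vch, hrd]
        by_cases h : x % d = r
        · simp only [h, if_true]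
          congr 1
          rw [div_div_eq_mul_div, mul_comm, mul_div_assoc, div_self hε0, mul_one]
        · simp [h]
      simp only [this]
      rw [sum_ind q d r hdvd hd0 (mem_range.1 hr), hqd]
      field_simp
    rw [Finset.sum_congr rfl key, Finset.sum_const, card_range, nsmul_eq_mul]
    field_simp
end
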